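/- Let Λ be a g-frame for H with upper bound B_Λ, let Λ^d be a dual g-frame of Λ, and suppose there exists μ ∈ [0, 1/B_Λ) such that ∑_i ‖(m_i Θ_i − Λ_i^d)f‖² ≤ μ‖f‖² for all f ∈ H. Then M_{m,Λ,Θ} is invertible on H with ‖h‖/(1 + √(μ B_Λ)) ≤ ‖M_{m,Λ,Θ}^{-1} h‖ ≤ ‖h‖/(1 − √(μ B_Λ)), and M_{m,Λ,Θ}^{-1} = ∑_{k=0}^{∞} (I − M_{m,Λ,Θ})^k. -/

import Mathlib

open ContinuousLinearMap
local notation "⟪" x ", " y "⟫" => @inner ℂ _ _ x y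

theorem stmt12 {H : Type*} [NormedAddCommGroup H] [InnerProductSpace ℂ H] [CompleteSpace H]
    {J : Type*} {Hi : J → Type*} [∀ i, NormedAddCommGroup (Hi i)]
    [∀ i, InnerProductSpace ℂ (Hi i)] [∀ i, CompleteSpace (Hi i)]
    (Λ Λd Θ : ∀ i, H →L[ℂ] Hi i) (m : J → ℂ) (AΛ BΛ μ : ℝ) (hAΛ : 0 < AΛ)
    (hΛ : ∀ f : H, ∃ s : ℝ, HasSum (fun i => ‖Λ i f‖ ^ 2) s ∧
      AΛ * ‖f‖ ^ 2 ≤ s ∧ s ≤ BΛ * ‖f‖ ^ 2)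
    (hdual : ∀ f : H, HasSum (fun i => adjoint (Λ i) (Λd i f)) f)
    (hμ0 : 0 ≤ μ) (hμ : μ < 1 / BΛ)
    (hperturb : ∀ f : H, ∃ s : ℝ,
      HasSum (fun i => ‖m i • Θ i f - Λd i f‖ ^ 2) s ∧ s ≤ μ * ‖f‖ ^ 2)
    (M : H →L[ℂ] H)
    (hM : ∀ f : H, HasSum (fun i => m i • adjoint (Λ i) (Θ i f)) (M f)) :
    ∃ Minv : H →L[ℂ] H, M * Minv = 1 ∧ Minv * M = 1 ∧
      (∀ h : H, ‖h‖ / (1 + Real.sqrt (μ * BΛ)) ≤ ‖Minv h‖ ∧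
        ‖Minv h‖ ≤ ‖h‖ / (1 - Real.sqrt (μ * BΛ))) ∧
      (∀ f : H, HasSum (fun k : ℕ => ((1 - M) ^ k) f) (Minv f)) := by
  have hB : 0 < BΛ := one_div_pos.mp (lt_of_le_of_lt hμ0 hμ)
  set r := Real.sqrt (μ * BΛ) with hrdef
  have hr0 : 0 ≤ r := Real.sqrt_nonneg _
  have hμB0 : 0 ≤ μ * BΛ := mul_nonneg hμ0 hB.le
  have hμB : μ * BΛ < 1 := by
    have := mul_lt_mul_of_pos_right hμ hB
    rwa [one_div_mul_cancel hB.ne'] at this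
  have hr1 : r < 1 := by
    have : r < Real.sqrt 1 := Real.sqrt_lt_sqrt hμB0 hμB
    simpa using this
  -- key norm estimate
  have hkey : ∀ f : H, ‖(1 - M) f‖ ≤ r * ‖f‖ := by
    intro f
    obtain ⟨sp, hsp, hsple⟩ := hperturb f
    set g := (1 - M) f with hg
    obtain ⟨sg, hsg, _, hsgle⟩ := hΛ g
    have hsp0 : 0 ≤ sp := hsp.nonneg fun i => by positivity
    have hsg0 : 0 ≤ sg := hsg.nonneg fun i => by positivity
    have h1 : HasSum (fun i => adjoint (Λ i) (Λd i f - m i • Θ i f)) g := by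
      have := (hdual f).sub (hM f)
      simpa [map_sub, map_smul, hg, sub_apply, one_apply] using this
    have h2 : HasSum (fun i => ⟪g, adjoint (Λ i) (Λd i f - m i • Θ i f)⟫) ⟪g, g⟫ :=
      (innerSL ℂ g).hasSum h1
    have hfin : ∀ s : Finset J,
        ‖∑ i ∈ s, ⟪g, adjoint (Λ i) (Λd i f - m i • Θ i f)⟫‖ ≤ Real.sqrt (sg * sp) := by
      intro s
      have step1 : ‖∑ i ∈ s, ⟪g, adjoint (Λ i) (Λd i f - m i • Θ i f)⟫‖
          ≤ ∑ i ∈ s, ‖Λ i g‖ * ‖m i • Θ i f - Λd i f‖ := by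
        refine (norm_sum_le _ _).trans (Finset.sum_le_sum fun i _ => ?_)
        rw [ContinuousLinearMap.adjoint_inner_right]
        calc ‖⟪Λ i g, Λd i f - m i • Θ i f⟫‖ ≤ ‖Λ i g‖ * ‖Λd i f - m i • Θ i f‖ :=
              norm_inner_le_norm _ _
          _ = ‖Λ i g‖ * ‖m i • Θ i f - Λd i f‖ := by rw [norm_sub_rev]
      refine step1.trans ?_
      have hsq := Finset.sum_mul_sq_le_sq_mul_sq s (fun i => ‖Λ i g‖)
        (fun i => ‖m i • Θ i f - Λd i f‖)
      have hA : ∑ i ∈ s, ‖Λ i g‖ ^ 2 ≤ sg :=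
        sum_le_hasSum s (fun i _ => by positivity) hsg
      have hBs : ∑ i ∈ s, ‖m i • Θ i f - Λd i f‖ ^ 2 ≤ sp :=
        sum_le_hasSum s (fun i _ => by positivity) hsp
      have hnn : 0 ≤ ∑ i ∈ s, ‖Λ i g‖ * ‖m i • Θ i f - Λd i f‖ :=
        Finset.sum_nonneg fun i _ => mul_nonneg (norm_nonneg _) (norm_nonneg _)
      rw [Real.le_sqrt hnn (mul_nonneg hsg0 hsp0)]
      calc (∑ i ∈ s, ‖Λ i g‖ * ‖m i • Θ i f - Λd i f‖) ^ 2
          ≤ (∑ i ∈ s, ‖Λ i g‖ ^ 2) * ∑ i ∈ s, ‖m i • Θ i f - Λd i f‖ ^ 2 := hsq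
        _ ≤ sg * sp := by
            apply mul_le_mul hA hBs (Finset.sum_nonneg fun i _ => by positivity) hsg0
    have hC : ‖(⟪g, g⟫ : ℂ)‖ ≤ Real.sqrt (sg * sp) :=
      le_of_tendsto' ((continuous_norm.tendsto _).comp h2) hfin
    have hgg : ‖(⟪g, g⟫ : ℂ)‖ = ‖g‖ ^ 2 := by
      rw [inner_self_eq_norm_sq_to_K]
      simp [Complex.norm_real]
    have hbound : ‖g‖ ^ 2 ≤ r * (‖f‖ * ‖g‖) := by
      rw [← hgg]
      refine hC.trans ?_
      have h3 : sg * sp ≤ (BΛ * ‖g‖ ^ 2) * (μ * ‖f‖ ^ 2) :=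
        mul_le_mul hsgle hsple hsp0 (by positivity)
      refine (Real.sqrt_le_sqrt h3).trans_eq ?_
      rw [show (BΛ * ‖g‖ ^ 2) * (μ * ‖f‖ ^ 2) = (μ * BΛ) * (‖f‖ * ‖g‖) ^ 2 by ring,
        Real.sqrt_mul hμB0, Real.sqrt_sq (by positivity)]
    rcases eq_or_lt_of_le (norm_nonneg g) with h0 | h0
    · rw [← h0]; positivity
    · nlinarith [norm_nonneg f]
  have hT : ‖(1 - M : H →L[ℂ] H)‖ ≤ r := opNorm_le_bound _ hr0 hkey
  have hT1 : ‖(1 - M : H →L[ℂ] H)‖ < 1 := lt_of_le_of_lt hT hr1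
  set u : (H →L[ℂ] H)ˣ := Units.oneSub (1 - M) hT1 with hu
  have huval : (u : H →L[ℂ] H) = M := by
    simp [hu, Units.oneSub, sub_sub_cancel]
  have hMinv : ((u⁻¹ : (H →L[ℂ] H)ˣ) : H →L[ℂ] H) = ∑' n : ℕ, (1 - M) ^ n := rfl
  refine ⟨(u⁻¹ : (H →L[ℂ] H)ˣ), ?_, ?_, ?_, ?_⟩
  · rw [← huval]; exact u.mul_inv
  · rw [← huval]; exact u.inv_mul
  · intro h
    set gh := ((u⁻¹ : (H →L[ℂ] H)ˣ) : H →L[ℂ] H) h with hgh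
    have hMg : M gh = h := by
      have h4 : M * ((u⁻¹ : (H →L[ℂ] H)ˣ) : H →L[ℂ] H) = 1 := by
        rw [← huval]; exact u.mul_inv
      have := DFunLike.congr_fun h4 h
      simpa [mul_apply, one_apply] using this
    have h5 : ‖(1 - M) gh‖ ≤ r * ‖gh‖ := hkey gh
    have e1 : (1 - M) gh = gh - h := by
      rw [sub_apply, ContinuousLinearMap.one_apply, hMg]
    rw [e1] at h5
    have hub : ‖h‖ ≤ (1 + r) * ‖gh‖ := by
      calc ‖h‖ = ‖gh - (gh - h)‖ := by rw [sub_sub_cancel]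
        _ ≤ ‖gh‖ + ‖gh - h‖ := norm_sub_le _ _
        _ ≤ ‖gh‖ + r * ‖gh‖ := by linarith
        _ = (1 + r) * ‖gh‖ := by ring
    have hlb : (1 - r) * ‖gh‖ ≤ ‖h‖ := by
      have : ‖gh‖ ≤ ‖h‖ + ‖gh - h‖ := by
        calc ‖gh‖ = ‖h + (gh - h)‖ := by rw [add_sub_cancel]
          _ ≤ ‖h‖ + ‖gh - h‖ := norm_add_le _ _
      nlinarith
    constructor
    · rw [div_le_iff₀ (by linarith)]
      linarith [hub]
    · rw [le_div_iff₀ (by linarith)]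
      nlinarith
  · intro f
    have hs : HasSum (fun n : ℕ => (1 - M) ^ n) (∑' n : ℕ, (1 - M) ^ n) :=
      (summable_geometric_of_norm_lt_one hT1).hasSum
    have := hs.mapL (ContinuousLinearMap.apply ℂ H f)
    rw [hMinv]
    simpa using this
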